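/- Let (G,f) = der_θ(G,·) with θ^{n-1} = id, and let u ∈ G be an idempotent of (G,f). Define δ(i,u) = θ(u)·θ²(u)···θ^i(u) for i ∈ ℤ_{n-1} (with δ(0,u) = e). Then the map q_u : G*_u → G*_e given by q_u(i,x) = (i, x·δ(i,u)) is a group isomorphism of Post covers. -/

import Mathlib

/-- The `n`-ary operation of `der_θ(G,·)`. -/
def derF {G : Type*} [Group G] (n : ℕ) (θ : MulAut G) (x : Fin n → G) : G :=
  (List.ofFn fun i : Fin n => (θ ^ (i : ℕ)) (x i)).prod

/-- Iterated application of `f` (i.e. `f_*`) to a list whose length is `≡ 1 mod (n-1)`: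
for `der_θ(G,·)` this is the product `∏ θ^{t mod (n-1)}(L_t)`. -/
def longProd {G : Type*} [Group G] (n : ℕ) (θ : MulAut G) (L : List G) : G :=
  (L.zipIdx.map fun p => (θ ^ (p.2 % (n - 1))) p.1).prod

/-- Multiplication of the Post cover `G*_a` based at `a`, with skew element `abar`. -/
def postOpA {G : Type*} [Group G] (n : ℕ) (θ : MulAut G) (a abar : G)
    (p q : ZMod (n - 1) × G) : ZMod (n - 1) × G :=
  (p.1 + q.1 + 1,
    longProd n θ
      ([p.2] ++ List.replicate p.1.val a ++ [q.2] ++ List.replicate q.1.val a ++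
        [abar] ++
        List.replicate ((((n : ℤ) - p.1.val - q.1.val - 3) % ((n : ℤ) - 1)).toNat) a))

/-- `δ(i,u) = θ(u)·θ²(u)⋯θ^i(u)`, with `δ(0,u) = e`. -/
def delta {G : Type*} [Group G] (θ : MulAut G) (k : ℕ) (u : G) : G :=
  (List.ofFn fun t : Fin k => (θ ^ ((t : ℕ) + 1)) u).prod

section Aux
variable {G : Type*} [Group G] (θ : MulAut G)

def myProd : ℕ → List G → G
  | _, [] => 1
  | s, x :: L => (θ ^ s) x * myProd (s+1) L

@[simp] lemma myProd_nil (s : ℕ) : myProd θ s ([] : List G) = 1 := rfl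

lemma myProd_cons (s : ℕ) (x : G) (L : List G) :
    myProd θ s (x :: L) = (θ ^ s) x * myProd θ (s+1) L := rfl

lemma myProd_append (L1 L2 : List G) : ∀ s,
    myProd θ s (L1 ++ L2) = myProd θ s L1 * myProd θ (s + L1.length) L2 := by
  induction L1 with
  | nil => intro s; simp
  | cons x L ih =>
      intro s
      have h : s + (x :: L).length = (s + 1) + L.length := by
        simp [List.length_cons]; omega
      simp only [List.cons_append, myProd_cons, ih, h, mul_assoc]

lemma myProd_singleton (s : ℕ) (x : G) : myProd θ s [x] = (θ ^ s) x := by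
  simp [myProd_cons]

lemma myProd_replicate_one : ∀ (k s : ℕ),
    myProd θ s (List.replicate k (1 : G)) = 1 := by
  intro k
  induction k with
  | zero => intro s; simp
  | succ k ih => intro s; simp [List.replicate_succ, myProd_cons, ih]

@[simp] lemma delta_zero (u : G) : delta θ 0 u = 1 := by simp [delta]

@[simp] lemma delta_one_elem (k : ℕ) : delta θ k (1 : G) = 1 := by simp [delta]

lemma delta_succ (k : ℕ) (u : G) :
    delta θ (k+1) u = delta θ k u * (θ ^ (k+1)) u := by
  rw [delta, List.ofFn_succ', List.concat_eq_append, List.prod_append]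
  simp [delta, Fin.last]

lemma delta_add (u : G) : ∀ (b a : ℕ),
    delta θ (a + b) u = delta θ a u * (θ ^ a) (delta θ b u) := by
  intro b
  induction b with
  | zero => intro a; simp
  | succ b ih =>
      intro a
      have h : a + (b + 1) = (a + b) + 1 := by omega
      rw [h, delta_succ, ih, delta_succ, map_mul, mul_assoc]
      congr 2
      rw [← MulAut.mul_apply, ← pow_add, h]

lemma myProd_replicate (u : G) : ∀ (k s : ℕ),
    myProd θ (s + 1) (List.replicate k u) = (θ ^ s) (delta θ k u) := by
  intro k
  induction k with
  | zero => intro s; simp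
  | succ k ih =>
      intro s
      rw [List.replicate_succ, myProd_cons, ih (s+1)]
      have h1 : delta θ (k + 1) u = delta θ 1 u * (θ ^ 1) (delta θ k u) := by
        rw [add_comm k 1]; exact delta_add θ u k 1
      have e1 : (θ ^ s) (delta θ 1 u) = (θ ^ (s+1)) u := by
        have hd : delta θ 1 u = θ u := by simp [delta]
        rw [hd, ← MulAut.mul_apply, ← pow_succ]
      have e2 : (θ ^ s) ((θ ^ 1) (delta θ k u)) = (θ ^ (s+1)) (delta θ k u) := by
        rw [← MulAut.mul_apply, ← pow_add]
      rw [h1, map_mul, e1, e2]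

variable {m : ℕ} (hm : 1 ≤ m) (hθm : θ ^ m = 1)

include hθm in
lemma theta_pow_mod (t : ℕ) : θ ^ (t % m) = θ ^ t := by
  conv_rhs => rw [← Nat.mod_add_div t m]
  rw [pow_add, pow_mul, hθm, one_pow, mul_one]

variable {u : G} (hδm : delta θ m u = 1)

include hδm in
lemma delta_period (a : ℕ) : delta θ (a + m) u = delta θ a u := by
  rw [delta_add, hδm, map_one, mul_one]

include hδm in
lemma delta_mod (a : ℕ) (hm : 1 ≤ m) : delta θ a u = delta θ (a % m) u := by
  have key : ∀ (k b : ℕ), delta θ (b + m * k) u = delta θ b u := by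
    intro k
    induction k with
    | zero => intro b; simp
    | succ k ih =>
        intro b
        have h : b + m * (k + 1) = (b + m * k) + m := by ring
        rw [h, delta_period θ hδm, ih]
  conv_lhs => rw [← Nat.mod_add_div a m]
  exact key _ _

include hθm hδm in
lemma key_alg (x y : G) (i j M : ℕ) (hij : (i + j + 2 + M) % m = 0) (hm : 1 ≤ m) :
    x * delta θ i u * (θ ^ (i+1)) y * (θ ^ (i+1)) (delta θ j u) *
      ((θ ^ (i+j+2)) u * (θ ^ (i+j+2)) (delta θ M u)) *
      delta θ ((i+j+1) % m) u
    = (x * delta θ i u) * (θ ^ (i+1)) (y * delta θ j u) := by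
  rw [map_mul (θ ^ (i+1)) y]
  have hu : (θ ^ (i+j+2)) u * (θ ^ (i+j+2)) (delta θ M u)
      = (θ ^ (i+j+1)) (delta θ (1 + M) u) := by
    have e0 : delta θ (1 + M) u = delta θ 1 u * (θ ^ 1) (delta θ M u) := delta_add θ u M 1
    have e1 : (θ ^ (i+j+1)) (delta θ 1 u) = (θ ^ (i+j+2)) u := by
      have hd : delta θ 1 u = θ u := by simp [delta]
      rw [hd, ← MulAut.mul_apply, ← pow_succ]
    have e2 : (θ ^ (i+j+1)) ((θ ^ 1) (delta θ M u)) = (θ ^ (i+j+2)) (delta θ M u) := by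
      rw [← MulAut.mul_apply, ← pow_add]
    rw [e0, map_mul, e1, e2]
  rw [hu]
  have h1 : delta θ (i+j+1) u * (θ ^ (i+j+1)) (delta θ (1+M) u) = 1 := by
    rw [← delta_add]
    have h2 : (i+j+1) + (1+M) = i + j + 2 + M := by omega
    rw [h2, delta_mod θ hδm _ hm, hij]
    simp
  have h3 : delta θ ((i+j+1) % m) u = delta θ (i+j+1) u := (delta_mod θ hδm _ hm).symm
  rw [h3]
  have h4 := inv_eq_of_mul_eq_one_right h1
  rw [← h4]
  group

include hθm hδm in
lemma main_second (hm : 1 ≤ m) (i j M : ℕ)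
    (hM : (i + j + 2 + M) % m = 0) (x y : G) :
    myProd θ 0 ([x] ++ List.replicate i u ++ [y] ++ List.replicate j u ++ [u]
        ++ List.replicate M u) * delta θ ((i + j + 1) % m) u
      = myProd θ 0 ([x * delta θ i u] ++ List.replicate i (1:G) ++ [y * delta θ j u]
        ++ List.replicate j (1:G) ++ [(1:G)] ++ List.replicate M (1:G)) := by
  simp only [myProd_append, myProd_singleton, List.length_append, List.length_replicate,
    List.length_singleton, myProd_replicate_one, myProd_replicate, map_one, mul_one, one_mul,
    pow_zero, MulAut.one_apply, delta_one_elem]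
  have hA : 0 + (1 + i + 1) = (i + 1) + 1 := by omega
  have hB : 0 + (1 + i + 1 + j + 1) = (i + j + 2) + 1 := by omega
  have hC : 0 + (1 + i) = i + 1 := by omega
  have hD : 0 + (1 + i + 1 + j) = i + j + 2 := by omega
  rw [hA, hB, hC, hD, myProd_replicate, myProd_replicate,
    mul_assoc (x * delta θ i u * (θ ^ (i+1)) y * (θ ^ (i+1)) (delta θ j u))]
  exact key_alg θ hθm hδm x y i j M hM hm

omit hθm hδm

lemma enumFrom_prod_eq_myProd :
    ∀ (L : List G) (s : ℕ),
      ((L.zipIdx s).map fun p => (θ ^ p.2) p.1).prod = myProd θ s L := by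
  intro L
  induction L with
  | nil => intro s; simp
  | cons x L ih =>
      intro s
      simp only [List.zipIdx_cons, List.map_cons, List.prod_cons, myProd_cons, ih]

lemma longProd_eq_myProd {n : ℕ} (hθt : ∀ t, θ ^ (t % (n-1)) = θ ^ t)
    (L : List G) (s : ℕ) :
    ((L.zipIdx s).map fun p => (θ ^ (p.2 % (n-1))) p.1).prod = myProd θ s L := by
  simp only [hθt]
  exact enumFrom_prod_eq_myProd θ L s

lemma count_mod (n i j : ℕ) (hn : 2 ≤ n) :
    (i + j + 2 + (((n:ℤ) - i - j - 3) % ((n:ℤ) - 1)).toNat) % (n-1) = 0 := by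
  have h2n : (2:ℤ) ≤ (n:ℤ) := by exact_mod_cast hn
  have hne : ((n:ℤ) - 1) ≠ 0 := by omega
  have hr0 : 0 ≤ ((n:ℤ) - i - j - 3) % ((n:ℤ) - 1) := Int.emod_nonneg _ hne
  have hZ : (((i + j + 2 + (((n:ℤ) - i - j - 3) % ((n:ℤ) - 1)).toNat : ℕ)) : ℤ)
      % ((n:ℤ) - 1) = 0 := by
    push_cast [Int.toNat_of_nonneg hr0]
    conv_lhs => rw [Int.add_emod]
    rw [Int.emod_emod_of_dvd _ dvd_rfl, ← Int.add_emod]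
    have h2 : (i:ℤ) + j + 2 + ((n:ℤ) - i - j - 3) = (n:ℤ) - 1 := by ring
    rw [h2, Int.emod_self]
  have hcast : ((n - 1 : ℕ) : ℤ) = (n:ℤ) - 1 := by omega
  have hfin : (((i + j + 2 + (((n:ℤ) - i - j - 3) % ((n:ℤ) - 1)).toNat) % (n-1) : ℕ) : ℤ)
      = 0 := by
    rw [Int.natCast_mod, hcast]
    exact_mod_cast hZ
  exact_mod_cast hfin

end Aux

/-- Let `(G,f) = der_θ(G,·)` with `θ^{n-1} = id`, and let `u` be an idempotent of
`(G,f)` (so its skew element is `u` itself).  Then `q_u(i,x) = (i, x·δ(i,u))` is a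
group isomorphism from the Post cover `G*_u` to the Post cover `G*_e`. -/
theorem post_cover_qu_iso {G : Type*} [Group G] (n : ℕ) (hn : 2 ≤ n)
    (θ : MulAut G) (hθ : θ ^ (n - 1) = 1)
    (u : G) (hidem : derF n θ (fun _ => u) = u) :
    Function.Bijective (fun p : ZMod (n - 1) × G => (p.1, p.2 * delta θ p.1.val u)) ∧
      ∀ p q : ZMod (n - 1) × G,
        ((postOpA n θ u u p q).1,
            (postOpA n θ u u p q).2 * delta θ (postOpA n θ u u p q).1.val u) =
          postOpA n θ 1 1 (p.1, p.2 * delta θ p.1.val u)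
            (q.1, q.2 * delta θ q.1.val u) := by
  obtain ⟨m, rfl⟩ : ∃ m, n = m + 1 := ⟨n - 1, by omega⟩
  have hm : 1 ≤ m := by omega
  haveI : NeZero (m + 1 - 1) := ⟨by omega⟩
  have hθm : θ ^ m = 1 := hθ
  have hδm : delta θ m u = 1 := by
    have h : derF (m+1) θ (fun _ => u) = u * delta θ m u := by
      rw [derF, List.ofFn_succ, List.prod_cons]
      simp [delta, Fin.val_succ]
    rw [h] at hidem
    calc delta θ m u = u⁻¹ * (u * delta θ m u) := by group
    _ = 1 := by rw [hidem]; group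
  constructor
  · apply Function.bijective_iff_has_inverse.mpr
    refine ⟨fun p => (p.1, p.2 * (delta θ p.1.val u)⁻¹), fun p => ?_, fun p => ?_⟩ <;>
      simp [mul_assoc]
  · intro p q
    have hθt : ∀ t, θ ^ (t % (m + 1 - 1)) = θ ^ t := fun t => theta_pow_mod θ hθm t
    have hlp : ∀ L : List G, longProd (m+1) θ L = myProd θ 0 L := by
      intro L
      rw [longProd]
      exact longProd_eq_myProd θ hθt L 0
    have hval : (p.1 + q.1 + 1).val % m = (p.1.val + q.1.val + 1) % m := by
      rw [ZMod.val_add, ZMod.val_add, ZMod.val_one_eq_one_mod]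
      simp only [Nat.add_sub_cancel]
      rw [Nat.mod_mod_of_dvd _ dvd_rfl, ← Nat.add_mod]
    have hk : delta θ ((p.1 + q.1 + 1).val) u
        = delta θ ((p.1.val + q.1.val + 1) % m) u := by
      rw [delta_mod θ hδm _ hm, hval]
    have hM := count_mod (m+1) p.1.val q.1.val (by omega)
    simp only [postOpA, Prod.mk.injEq]
    refine ⟨trivial, ?_⟩
    rw [hlp, hlp, hk]
    exact main_second θ hθm hδm hm p.1.val q.1.val _ hM p.2 q.2
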